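/- arXiv:1111.3020 — 3 statements merged into one kernel-verified Lean document; each statement's English description precedes it below -/
import Mathlib

section
/- Let (R, m) be a Noetherian local domain with Krull dimension at least 2. Then for any element f ∈ R, the localization R[f⁻¹] is not a field. -/
section Aux

/-- A Noetherian ring with a nilpotent maximal ideal is Artinian. -/
lemma isArtinianRing_of_nilpotent_maximal {T : Type*} [CommRing T] [IsNoetherianRing T]
    (J : Ideal T) (hJ : J.IsMaximal) (k : ℕ) (hk : J ^ k = ⊥) : IsArtinianRing T := by
  haveI : J.IsMaximal := hJ
  have main : ∀ i : ℕ, IsArtinian T (T ⧸ (J ^ i : Ideal T)) := by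
    intro i
    induction i with
    | zero =>
      rw [pow_zero, Ideal.one_eq_top]
      haveI : Subsingleton (T ⧸ (⊤ : Ideal T)) :=
        Submodule.Quotient.subsingleton_iff.mpr rfl
      haveI : Finite (T ⧸ (⊤ : Ideal T)) := Finite.of_subsingleton
      infer_instance
    | succ i ih =>
      set Sb : Submodule T (T ⧸ (J ^ (i + 1) : Ideal T)) :=
        Submodule.map (J ^ (i + 1) : Ideal T).mkQ (J ^ i : Ideal T) with hSb
      have hle : (J ^ (i + 1) : Ideal T) ≤ (J ^ i : Ideal T) :=
        Ideal.pow_le_pow_right (Nat.le_succ i)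
      -- `Sb` is artinian over `T`
      haveI : Module.Finite T Sb := Module.Finite.iff_fg.mpr (IsNoetherian.noetherian Sb)
      have htor : Module.IsTorsionBySet T Sb (J : Set T) := by
        rintro ⟨x, hx⟩ ⟨a, ha⟩
        obtain ⟨y, hy, rfl⟩ := Submodule.mem_map.mp hx
        ext
        show a • (J ^ (i + 1) : Ideal T).mkQ y = 0
        rw [Submodule.mkQ_apply, ← Submodule.Quotient.mk_smul,
          Submodule.Quotient.mk_eq_zero]
        have : a * y ∈ J * J ^ i := Ideal.mul_mem_mul ha hy
        rwa [mul_comm J (J ^ i), ← pow_succ] at this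
      letI : Module (T ⧸ J) Sb := htor.module
      letI : IsScalarTower T (T ⧸ J) Sb := htor.isScalarTower
      letI : Field (T ⧸ J) := Ideal.Quotient.field J
      haveI : Module.Finite (T ⧸ J) Sb := Module.Finite.of_restrictScalars_finite T _ _
      haveI : IsArtinian (T ⧸ J) Sb := inferInstance
      haveI hSbArt : IsArtinian T Sb := by
        let F : Submodule T Sb → Submodule (T ⧸ J) Sb := fun W =>
          { carrier := W
            add_mem' := fun ha hb => W.add_mem ha hb
            zero_mem' := W.zero_mem
            smul_mem' := by
              rintro t w hw
              induction t using Quotient.inductionOn' with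
              | h t =>
                have ht : (Submodule.Quotient.mk t : T ⧸ J) • w = t • w := by
                  rw [show (Submodule.Quotient.mk t : T ⧸ J) = algebraMap T (T ⧸ J) t from rfl,
                    algebraMap_smul]
                rw [show (Quotient.mk'' t : T ⧸ J) = Submodule.Quotient.mk t from rfl, ht]
                exact W.smul_mem t hw }
        have hF : StrictMono F := fun W V hWV =>
          lt_of_le_of_ne (fun s hs => hWV.le hs) (fun h => hWV.ne (by
            have hc : (F W : Set Sb) = (F V : Set Sb) := congrArg SetLike.coe h
            exact SetLike.coe_injective (show (W : Set Sb) = (V : Set Sb) from hc)))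
        have hwf : WellFounded ((· < ·) : Submodule (T ⧸ J) Sb → Submodule (T ⧸ J) Sb → Prop) :=
          (isArtinian_iff _ _).mp ‹IsArtinian (T ⧸ J) Sb›
        exact (isArtinian_iff _ _).mpr (Subrelation.wf (fun {a b} hab => hF hab) (InvImage.wf F hwf))
      -- the quotient of `T ⧸ J ^ (i+1)` by `Sb` is `T ⧸ J ^ i`
      have equiv : ((T ⧸ (J ^ (i + 1) : Ideal T)) ⧸ Sb) ≃ₗ[T] T ⧸ (J ^ i : Ideal T) :=
        Submodule.quotientQuotientEquivQuotient _ _ hle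
      haveI : IsArtinian T ((T ⧸ (J ^ (i + 1) : Ideal T)) ⧸ Sb) :=
        isArtinian_of_linearEquiv equiv.symm
      exact (isArtinian_iff_submodule_quotient Sb).mpr ⟨hSbArt, this⟩
  have hTk := main k
  rw [hk] at hTk
  exact isArtinian_of_linearEquiv (Submodule.quotEquivOfEqBot (⊥ : Ideal T) rfl)

/-- A special case of Krull's principal ideal theorem: in a Noetherian local domain, if the
maximal ideal is the unique prime containing some element `x`, then every non-maximal prime
is zero. -/
lemma prime_eq_bot_of_unique_prime_over {S : Type*} [CommRing S] [IsDomain S]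
    [IsNoetherianRing S] [IsLocalRing S] (x : S) (hx : x ∈ IsLocalRing.maximalIdeal S)
    (hmin : ∀ r : Ideal S, r.IsPrime → x ∈ r → r = IsLocalRing.maximalIdeal S)
    (P : Ideal S) (hP : P.IsPrime) (hPne : P ≠ IsLocalRing.maximalIdeal S) : P = ⊥ := by
  haveI : P.IsPrime := hP
  have hxP : x ∉ P := fun h => hPne (hmin P hP h)
  set n : Ideal S := IsLocalRing.maximalIdeal S with hn
  -- some power of the maximal ideal is contained in (x)
  have hrad : (Ideal.span {x}).radical = n := by
    rw [Ideal.radical_eq_sInf]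
    apply le_antisymm
    · exact sInf_le ⟨(Ideal.span_singleton_le_iff_mem _).mpr hx, inferInstance⟩
    · refine le_sInf fun J hJ => ?_
      rw [hmin J hJ.2 (hJ.1 (Ideal.mem_span_singleton_self x))]
  obtain ⟨k0, hk0⟩ := Ideal.exists_radical_pow_le_of_fg (Ideal.span {x})
    (IsNoetherian.noetherian _)
  rw [hrad] at hk0
  -- the quotient by (x) is Artinian
  set T := S ⧸ Ideal.span {x} with hT
  set mk : S →+* T := Ideal.Quotient.mk (Ideal.span {x}) with hmk
  have hsmk : Function.Surjective mk := Ideal.Quotient.mk_surjective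
  have hspanle : Ideal.span {x} ≤ n := (Ideal.span_singleton_le_iff_mem _).mpr hx
  have hJmax : (n.map mk).IsMaximal := by
    rcases Ideal.map_eq_top_or_isMaximal_of_surjective mk hsmk
      (IsLocalRing.maximalIdeal.isMaximal S) with h | h
    · exfalso
      have := congrArg (Ideal.comap mk) h
      rw [Ideal.comap_map_of_surjective mk hsmk, Ideal.comap_top, ← RingHom.ker_eq_comap_bot,
        Ideal.mk_ker, sup_eq_left.mpr hspanle] at this
      exact (IsLocalRing.maximalIdeal.isMaximal S).ne_top this
    · exact h
  have hJk : (n.map mk) ^ k0 = ⊥ := by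
    rw [← Ideal.map_pow]
    refine le_bot_iff.mp ?_
    calc (n ^ k0).map mk ≤ (Ideal.span {x}).map mk := Ideal.map_mono hk0
    _ = ⊥ := Ideal.map_quotient_self _
  haveI hart : IsArtinianRing T := isArtinianRing_of_nilpotent_maximal (n.map mk) hJmax k0 hJk
  -- symbolic powers
  set L := Localization.AtPrime P with hL
  set ψ : S →+* L := algebraMap S L with hψ
  haveI : IsNoetherianRing L := IsLocalization.isNoetherianRing P.primeCompl L ‹_›
  set Mι : Ideal L := IsLocalRing.maximalIdeal L with hMι
  have hMap : Ideal.map ψ P = Mι := Localization.AtPrime.map_eq_maximalIdeal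
  set Q : ℕ → Ideal S := fun i => (Mι ^ i).comap ψ with hQ
  have hQanti : ∀ {i j : ℕ}, i ≤ j → Q j ≤ Q i := fun hij =>
    Ideal.comap_mono (Ideal.pow_le_pow_right hij)
  -- stabilization
  have hg : ∀ {i j : ℕ}, i ≤ j →
      (OrderDual.toDual ((Q i).map mk) : (Submodule T T)ᵒᵈ) ≤ OrderDual.toDual ((Q j).map mk) :=
    fun hij => Ideal.map_mono (hQanti hij)
  obtain ⟨N, hN⟩ := IsArtinian.monotone_stabilizes
    (⟨fun i => OrderDual.toDual ((Q i).map mk), fun _ _ hij => hg hij⟩ : ℕ →o (Submodule T T)ᵒᵈ)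
  set k := N + 1 with hkdef
  have hstab : (Q k).map mk = (Q (k + 1)).map mk := by
    have h1 := hN k (Nat.le_succ N)
    have h2 := hN (k + 1) (le_trans (Nat.le_succ N) (Nat.le_succ k))
    exact OrderDual.toDual.injective (h1.symm.trans h2)
  -- comap back down
  have hsup : Q k ⊔ Ideal.span {x} = Q (k + 1) ⊔ Ideal.span {x} := by
    have := congrArg (Ideal.comap mk) hstab
    rwa [Ideal.comap_map_of_surjective mk hsmk, Ideal.comap_map_of_surjective mk hsmk,
      ← RingHom.ker_eq_comap_bot, Ideal.mk_ker] at this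
  -- key step: Q k ≤ Q (k+1) + x • Q k
  have hxunit : IsUnit (ψ x) :=
    IsLocalization.map_units L (⟨x, hxP⟩ : P.primeCompl)
  have key : Q k ≤ Q (k + 1) ⊔ (Ideal.span {x} • Q k) := by
    intro a ha
    have h1 : a ∈ Q (k + 1) ⊔ Ideal.span {x} := by
      rw [← hsup]; exact Submodule.mem_sup_left ha
    obtain ⟨b, hb, y, hy, hab⟩ := Submodule.mem_sup.mp h1
    obtain ⟨c, rfl⟩ := Ideal.mem_span_singleton'.mp hy
    have hcx : c * x ∈ Q k := by
      have : c * x = a - b := by rw [← hab]; ring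
      rw [this]
      exact Submodule.sub_mem _ ha (hQanti (Nat.le_succ k) hb)
    have hc : c ∈ Q k := by
      obtain ⟨v, hv⟩ := hxunit
      have hmem : ψ c * ψ x ∈ Mι ^ k := by
        rw [← map_mul]; exact hcx
      show ψ c ∈ Mι ^ k
      have h2 : (↑v⁻¹ : L) * (ψ c * ψ x) ∈ Mι ^ k :=
        Ideal.mul_mem_left _ _ hmem
      have h3 : (↑v⁻¹ : L) * (ψ c * ψ x) = ψ c := by
        rw [← hv, mul_comm (ψ c) (v : L), Units.inv_mul_cancel_left]
      rwa [h3] at h2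
    rw [← hab]
    refine Submodule.add_mem _ (Submodule.mem_sup_left hb) (Submodule.mem_sup_right ?_)
    rw [smul_eq_mul, mul_comm c x]
    exact Ideal.mul_mem_mul (Ideal.mem_span_singleton_self x) hc
  -- Nakayama
  have hjac : Ideal.span {x} ≤ Ideal.jacobson ⊥ :=
    le_trans hspanle (IsLocalRing.maximalIdeal_le_jacobson ⊥)
  have hQeq : Q k = Q (k + 1) :=
    le_antisymm
      (Submodule.le_of_le_smul_of_le_jacobson_bot (IsNoetherian.noetherian _) hjac key)
      (hQanti (Nat.le_succ k))
  -- back in L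
  have hMk : Mι ^ k = Mι ^ (k + 1) := by
    have h1 : (Q k).map ψ = Mι ^ k := IsLocalization.map_comap P.primeCompl L _
    have h2 : (Q (k + 1)).map ψ = Mι ^ (k + 1) := IsLocalization.map_comap P.primeCompl L _
    rw [← h1, ← h2, hQeq]
  have hMbot : Mι ^ k = ⊥ := by
    refine Submodule.eq_bot_of_le_smul_of_le_jacobson_bot Mι _ (IsNoetherian.noetherian _)
      ?_ (IsLocalRing.maximalIdeal_le_jacobson ⊥)
    rw [smul_eq_mul]
    exact le_of_eq (hMk.trans (by rw [pow_succ]; exact mul_comm _ _))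
  have hMιbot : Mι = ⊥ := by
    refine le_bot_iff.mp fun t ht => ?_
    have : t ^ k ∈ Mι ^ k := Ideal.pow_mem_pow ht k
    rw [hMbot, Submodule.mem_bot] at this
    have hk0' : k ≠ 0 := Nat.succ_ne_zero N
    simpa [Submodule.mem_bot] using pow_eq_zero_iff hk0' |>.mp this
  -- conclude P = ⊥
  have hinj : Function.Injective ψ :=
    IsLocalization.injective L P.primeCompl_le_nonZeroDivisors
  have := IsLocalization.comap_map_of_isPrime_disjoint P.primeCompl L hP
    disjoint_compl_left
  rw [hMap, hMιbot] at this
  rw [← this, Ideal.under_def, ← RingHom.ker_eq_comap_bot]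
  exact (RingHom.injective_iff_ker_eq_bot ψ).mp hinj

end Aux

/-- Let `(R, m)` be a Noetherian local domain of Krull dimension at least `2`.
Then for any `f ∈ R`, the localization `R[f⁻¹]` is not a field. -/
theorem localization_away_not_isField_of_two_le_krullDim
    (R : Type*) [CommRing R] [IsDomain R] [IsNoetherianRing R] [IsLocalRing R]
    (hdim : 2 ≤ ringKrullDim R) (f : R) :
    ¬ IsField (Localization.Away f) := by
  intro hF
  set A := Localization.Away f with hA
  set φ : R →+* A := algebraMap R A with hφ
  -- f ≠ 0
  have hf0 : f ≠ 0 := by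
    intro h
    have hunit : IsUnit (φ f) := IsLocalization.map_units A (⟨f, Submonoid.mem_powers f⟩)
    have hz : φ f = 0 := by
      have := congrArg φ h
      rwa [map_zero] at this
    rw [hz] at hunit
    obtain ⟨a, b, hab⟩ := hF.exists_pair_ne
    exact hab (Subsingleton.elim a b
      (α := A) (h := subsingleton_of_zero_eq_one (isUnit_zero_iff.mp hunit)))
  have hinj : Function.Injective φ :=
    IsLocalization.injective A (powers_le_nonZeroDivisors_of_noZeroDivisors hf0)
  -- every nonzero prime contains f
  have hcontain : ∀ r : Ideal R, r.IsPrime → r ≠ ⊥ → f ∈ r := by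
    intro r hr hrne
    by_contra hfr
    have hdisj : Disjoint ((Submonoid.powers f : Submonoid R) : Set R) (r : Set R) := by
      rw [Set.disjoint_left]
      rintro a ⟨n, rfl⟩ har
      exact hfr (hr.mem_of_pow_mem n har)
    have hPrime : (r.map φ).IsPrime :=
      IsLocalization.isPrime_of_isPrime_disjoint (Submonoid.powers f) A r hr hdisj
    letI : Field A := hF.toField
    rcases (r.map φ).eq_bot_or_top with hbot | htop
    · have hcm := IsLocalization.comap_map_of_isPrime_disjoint (Submonoid.powers f) A hr hdisj
      rw [hbot, Ideal.under_def, ← RingHom.ker_eq_comap_bot, (RingHom.injective_iff_ker_eq_bot φ).mp hinj] at hcm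
      exact hrne hcm.symm
    · exact hPrime.ne_top htop
  -- get a chain of primes of length 2
  have hchain : ∃ c : LTSeries (PrimeSpectrum R), 2 ≤ c.length := by
    by_contra h
    push_neg at h
    have hle : ringKrullDim R ≤ 1 := by
      refine iSup_le fun c => ?_
      have := h c
      have hc1 : c.length ≤ 1 := by omega
      exact_mod_cast hc1
    have : (2 : WithBot (WithTop ℕ)) ≤ 1 := le_trans hdim hle
    norm_num at this
  obtain ⟨c, hc⟩ := hchain
  have h01 : c ⟨0, by omega⟩ < c ⟨1, by omega⟩ := c.strictMono (by simp [Fin.lt_def])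
  have h12 : c ⟨1, by omega⟩ < c ⟨2, by omega⟩ := c.strictMono (by simp [Fin.lt_def])
  set p1 : Ideal R := (c ⟨1, by omega⟩).asIdeal with hp1def
  set p2 : Ideal R := (c ⟨2, by omega⟩).asIdeal with hp2def
  haveI hp1p : p1.IsPrime := (c ⟨1, by omega⟩).isPrime
  haveI hp2p : p2.IsPrime := (c ⟨2, by omega⟩).isPrime
  have hp1lt : p1 < p2 := h12
  have hp1ne : p1 ≠ ⊥ := by
    intro h
    have : (c ⟨0, by omega⟩).asIdeal < p1 := h01
    rw [h] at this
    exact (not_lt_bot this)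
  have hp2ne : p2 ≠ ⊥ := fun h => hp1ne (le_bot_iff.mp (h ▸ hp1lt.le))
  set m : Ideal R := IsLocalRing.maximalIdeal R with hm
  -- the minimal primes over (f)
  have hfp2 : Ideal.span {f} ≤ p2 :=
    (Ideal.span_singleton_le_iff_mem _).mpr (hcontain p2 hp2p hp2ne)
  -- no minimal prime over (f) is m
  have hTnm : ∀ p ∈ (Ideal.span {f}).minimalPrimes, p ≠ m := by
    intro p hp hpm
    have hfp1 : Ideal.span {f} ≤ p1 :=
      (Ideal.span_singleton_le_iff_mem _).mpr (hcontain p1 hp1p hp1ne)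
    have hp1m : p1 ≤ m := IsLocalRing.le_maximalIdeal hp1p.ne_top
    have := hp.2 ⟨hp1p, hfp1⟩ (hpm ▸ hp1m)
    -- this : p ≤ p1
    have hp1eq : p1 = m := le_antisymm hp1m (hpm ▸ this)
    have hp2m : p2 ≤ m := IsLocalRing.le_maximalIdeal hp2p.ne_top
    rw [← hp1eq] at hp2m
    exact absurd hp2m (not_le_of_gt hp1lt)
  -- finiteness of minimal primes
  have hfin : (Ideal.span {f}).minimalPrimes.Finite := by
    rw [Ideal.minimalPrimes_eq_comap]
    exact ((minimalPrimes.finite_of_isNoetherianRing (R ⧸ Ideal.span {f})).image _)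
  -- prime avoidance: find x ∈ m avoiding all minimal primes of (f)
  have havoid : ∃ x ∈ m, ∀ p ∈ (Ideal.span {f}).minimalPrimes, x ∉ p := by
    by_contra h
    push_neg at h
    have hsub : (m : Set R) ⊆ ⋃ p ∈ hfin.toFinset, (p : Set R) := by
      intro x hx
      obtain ⟨p, hp, hxp⟩ := h x hx
      exact Set.mem_biUnion (hfin.mem_toFinset.mpr hp) hxp
    have := (Ideal.subset_union_prime (⊥ : Ideal R) (⊥ : Ideal R)
      (fun p hp _ _ => (hfin.mem_toFinset.mp hp).1.1)).mp hsub
    obtain ⟨p, hp, hmp⟩ := this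
    have hp' := hfin.mem_toFinset.mp hp
    exact hTnm p hp' (le_antisymm (IsLocalRing.le_maximalIdeal hp'.1.1.ne_top) hmp)
  obtain ⟨x, hxm, hxavoid⟩ := havoid
  -- x ≠ 0
  obtain ⟨p0, hp0, _⟩ := Ideal.exists_minimalPrimes_le hfp2
  have hx0 : x ≠ 0 := fun h => hxavoid p0 hp0 (h ▸ p0.zero_mem)
  -- q: a minimal prime over (x)
  obtain ⟨q, hq, hqm⟩ := Ideal.exists_minimalPrimes_le
    ((Ideal.span_singleton_le_iff_mem m).mpr hxm)
  haveI hqp : q.IsPrime := hq.1.1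
  have hxq : x ∈ q := hq.1.2 (Ideal.mem_span_singleton_self x)
  have hqne : q ≠ ⊥ := fun h => hx0 (by rw [h] at hxq; exact hxq)
  have hfq : f ∈ q := hcontain q hqp hqne
  -- p': a minimal prime over (f) inside q
  obtain ⟨p', hp', hp'q⟩ := Ideal.exists_minimalPrimes_le
    ((Ideal.span_singleton_le_iff_mem q).mpr hfq)
  haveI hp'p : p'.IsPrime := hp'.1.1
  have hfp' : f ∈ p' := hp'.1.2 (Ideal.mem_span_singleton_self f)
  have hp'ltq : p' ≠ q := fun h => hxavoid p' hp' (h ▸ hxq)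
  -- now localize at q and apply the principal ideal theorem
  set S := Localization.AtPrime q with hS
  set ψ : R →+* S := algebraMap R S with hψS
  haveI : IsNoetherianRing S := IsLocalization.isNoetherianRing q.primeCompl S ‹_›
  have hψinj : Function.Injective ψ :=
    IsLocalization.injective S q.primeCompl_le_nonZeroDivisors
  have hxS : ψ x ∈ IsLocalRing.maximalIdeal S :=
    (IsLocalization.AtPrime.to_map_mem_maximal_iff S q x).mpr hxq
  -- every prime of S containing ψ x is the maximal ideal
  have hminS : ∀ r : Ideal S, r.IsPrime → ψ x ∈ r → r = IsLocalRing.maximalIdeal S := by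
    intro r hr hxr
    haveI := hr
    have hcomle : r.comap ψ ≤ q := by
      intro y hy
      by_contra hyq
      have : IsUnit (ψ y) := IsLocalization.map_units S (⟨y, hyq⟩ : q.primeCompl)
      exact hr.ne_top (r.eq_top_of_isUnit_mem (Ideal.mem_comap.mp hy) this)
    have hxcom : x ∈ r.comap ψ := Ideal.mem_comap.mpr hxr
    have hcomeq : r.comap ψ = q := by
      have := hq.2 ⟨Ideal.IsPrime.comap ψ (hK := hr),
        (Ideal.span_singleton_le_iff_mem _).mpr hxcom⟩ hcomle
      exact le_antisymm hcomle this
    have : r = (r.comap ψ).map ψ := (IsLocalization.map_comap q.primeCompl S r).symm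
    rw [this, hcomeq]
    exact Localization.AtPrime.map_eq_maximalIdeal
  -- the image of p' is a nonzero non-maximal prime of S
  have hp'disj : Disjoint ((q.primeCompl : Submonoid R) : Set R) (p' : Set R) :=
    Set.disjoint_left.mpr fun {a} haC haP => haC (hp'q haP)
  have hPprime : (p'.map ψ).IsPrime :=
    IsLocalization.isPrime_of_isPrime_disjoint q.primeCompl S p' hp'p hp'disj
  have hPne : p'.map ψ ≠ IsLocalRing.maximalIdeal S := by
    intro h
    have h1 := IsLocalization.comap_map_of_isPrime_disjoint q.primeCompl S hp'p hp'disj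
    rw [h, Localization.AtPrime.comap_maximalIdeal] at h1
    exact hp'ltq h1.symm
  have hPbot : p'.map ψ = ⊥ :=
    prime_eq_bot_of_unique_prime_over (ψ x) hxS hminS (p'.map ψ) hPprime hPne
  have : ψ f ∈ (⊥ : Ideal S) := by rw [← hPbot]; exact Ideal.mem_map_of_mem ψ hfp'
  rw [Submodule.mem_bot] at this
  exact hf0 (hψinj (by rw [this, map_zero]))
end

section
/- Let f : M → N be a homomorphism of modules over a Noetherian ring R such that the cokernel N/f(M) is finitely generated (and M, N arbitrary). If f is pure (remains injective after tensoring with every R-module), then f splits, and conversely every split injection is pure. -/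
universe u v w

open TensorProduct

/-- A linear map `f : M → N` is *pure* if it remains injective after tensoring with every
`R`-module. -/
def LinearMap.IsPure {R : Type u} [CommRing R] {M : Type v} {N : Type w}
    [AddCommGroup M] [AddCommGroup N] [Module R M] [Module R N] (f : M →ₗ[R] N) : Prop :=
  ∀ (K : Type u) [AddCommGroup K] [Module R K], Function.Injective (LinearMap.rTensor K f)

/-- Over a Noetherian ring `R`, a module map `f : M → N` with finitely
generated cokernel splits as soon as it is pure; conversely every split injection is pure. -/
theorem isPure_iff_splits_of_finite_cokernel {R : Type u} [CommRing R] [IsNoetherianRing R]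
    {M : Type u} {N : Type u} [AddCommGroup M] [AddCommGroup N] [Module R M] [Module R N]
    (f : M →ₗ[R] N) (hcoker : Module.Finite R (N ⧸ LinearMap.range f)) :
    (f.IsPure → ∃ g : N →ₗ[R] M, g.comp f = LinearMap.id) ∧
    (∀ g : N →ₗ[R] M, g.comp f = LinearMap.id → f.IsPure) := by
  classical
  constructor
  · intro hpure
    -- `f` is injective (tensor with `R`).
    have hinj : Function.Injective f := by
      intro x y hxy
      have h1 : (LinearMap.rTensor R f) (x ⊗ₜ[R] (1 : R)) =
          (LinearMap.rTensor R f) (y ⊗ₜ[R] (1 : R)) := by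
        simp [LinearMap.rTensor_tmul, hxy]
      have h2 := hpure R h1
      have := congrArg (TensorProduct.rid R M) h2
      simpa using this
    set π := (LinearMap.range f).mkQ with hπdef
    -- finite presentation of the cokernel
    obtain ⟨n, p, hp⟩ := Module.Finite.exists_fin' R (N ⧸ LinearMap.range f)
    obtain ⟨k, a, ha⟩ := Submodule.fg_iff_exists_fin_generating_family.mp
      (IsNoetherian.noetherian (LinearMap.ker p))
    obtain ⟨q, hq⟩ := Module.projective_lifting_property π p
      (Submodule.mkQ_surjective (LinearMap.range f))
    have haker : ∀ i, a i ∈ LinearMap.ker p := fun i => by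
      rw [← ha]; exact Submodule.subset_span ⟨i, rfl⟩
    -- the relations land in the image of f
    have hqa : ∀ i, q (a i) ∈ LinearMap.range f := by
      intro i
      have : π (q (a i)) = 0 := by
        have := LinearMap.congr_fun hq (a i)
        simp only [LinearMap.comp_apply] at this
        rw [this]
        exact haker i
      rwa [hπdef, Submodule.mkQ_apply, Submodule.Quotient.mk_eq_zero] at this
    choose m hm using hqa
    -- the matrix of relations
    set α : (Fin n → R) →ₗ[R] (Fin k → R) :=
      (Matrix.of fun i j => a i j).mulVecLin with hαdef
    set K := (Fin k → R) ⧸ LinearMap.range α with hKdef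
    set ρ := (LinearMap.range α).mkQ with hρdef
    set t : M ⊗[R] (Fin k → R) := ∑ i, m i ⊗ₜ[R] Pi.single i (1 : R) with htdef
    -- the image of `t` in `N ⊗ K` vanishes
    have hzero : LinearMap.lTensor N ρ (LinearMap.rTensor (Fin k → R) f t) = 0 := by
      rw [htdef, map_sum, map_sum]
      have step1 : ∀ i, LinearMap.lTensor N ρ (LinearMap.rTensor (Fin k → R) f
          (m i ⊗ₜ[R] Pi.single i (1 : R))) = q (a i) ⊗ₜ[R] ρ (Pi.single i (1 : R)) := by
        intro i
        simp [LinearMap.rTensor_tmul, LinearMap.lTensor_tmul, hm]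
      rw [Finset.sum_congr rfl fun i _ => step1 i]
      have hsingle : ∀ x : Fin n, (fun j => if x = j then (1:R) else 0) = Pi.single x (1:R) := by
        intro x; funext j'; simp [Pi.single_apply, eq_comm]
      have hqa' : ∀ i, q (a i) = ∑ j, a i j • q (Pi.single j (1 : R)) := by
        intro i
        conv_lhs => rw [pi_eq_sum_univ (a i)]
        rw [map_sum]
        exact Finset.sum_congr rfl fun j _ => by rw [hsingle, map_smul]
      calc (∑ i, q (a i) ⊗ₜ[R] ρ (Pi.single i (1 : R)))
          = ∑ i, ∑ j, q (Pi.single j (1 : R)) ⊗ₜ[R] (a i j • ρ (Pi.single i (1 : R))) := by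
            refine Finset.sum_congr rfl fun i _ => ?_
            rw [hqa' i, TensorProduct.sum_tmul]
            exact Finset.sum_congr rfl fun j _ => by
              rw [TensorProduct.smul_tmul]
        _ = ∑ j, q (Pi.single j (1 : R)) ⊗ₜ[R] (∑ i, a i j • ρ (Pi.single i (1 : R))) := by
            rw [Finset.sum_comm]
            exact Finset.sum_congr rfl fun j _ => (TensorProduct.tmul_sum _ _ _).symm
        _ = 0 := by
            refine Finset.sum_eq_zero fun j _ => ?_
            have h1 : (∑ i, a i j • ρ (Pi.single i (1 : R))) =
                ρ (∑ i, a i j • (Pi.single i (1 : R) : Fin k → R)) := by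
              rw [map_sum]
              exact Finset.sum_congr rfl fun i _ => (map_smul ρ _ _).symm
            have h2 : (∑ i, a i j • (Pi.single i (1 : R) : Fin k → R)) = α (Pi.single j (1 : R)) := by
              funext i'
              simp [hαdef, Matrix.mulVecLin_apply, Matrix.mulVec, dotProduct,
                Finset.sum_apply, Pi.single_apply, mul_ite, eq_comm]
            have : (∑ i, a i j • ρ (Pi.single i (1 : R))) = ρ (α (Pi.single j (1 : R))) := by
              rw [h1, h2]
            rw [this]
            have : ρ (α (Pi.single j (1 : R))) = 0 := by
              rw [hρdef, Submodule.mkQ_apply, Submodule.Quotient.mk_eq_zero]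
              exact ⟨_, rfl⟩
            rw [this, TensorProduct.tmul_zero]
    -- purity: the image of `t` in `M ⊗ K` vanishes
    have ht0 : LinearMap.lTensor M ρ t = 0 := by
      apply hpure K
      have comm : (LinearMap.rTensor K f).comp (LinearMap.lTensor M ρ) =
          (LinearMap.lTensor N ρ).comp (LinearMap.rTensor (Fin k → R) f) := by
        rw [LinearMap.rTensor_comp_lTensor, LinearMap.lTensor_comp_rTensor]
      have := LinearMap.congr_fun comm t
      simp only [LinearMap.comp_apply] at this
      rw [this, hzero, map_zero]
    -- right exactness: `t` comes from `M ⊗ (Fin n → R)`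
    have hexact : Function.Exact (LinearMap.lTensor M α) (LinearMap.lTensor M ρ) :=
      lTensor_exact M (g := ρ)
        (LinearMap.exact_iff.mpr (Submodule.ker_mkQ _)) (Submodule.mkQ_surjective _)
    obtain ⟨s, hs⟩ := (hexact t).mp ht0
    -- components of s solve the system of equations inside M
    set φ : Fin n → (M ⊗[R] (Fin n → R)) →ₗ[R] M := fun j =>
      (TensorProduct.rid R M).toLinearMap.comp
        (LinearMap.lTensor M (LinearMap.proj j)) with hφdef
    set ψ : Fin k → (M ⊗[R] (Fin k → R)) →ₗ[R] M := fun i =>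
      (TensorProduct.rid R M).toLinearMap.comp
        (LinearMap.lTensor M (LinearMap.proj i)) with hψdef
    set y : Fin n → M := fun j => φ j s with hydef
    have hψt : ∀ i, ψ i t = m i := by
      intro i
      rw [htdef, map_sum]
      have : ∀ i', ψ i (m i' ⊗ₜ[R] Pi.single i' (1 : R)) =
          (Pi.single i' (1 : R) : Fin k → R) i • m i' := by
        intro i'
        simp [hψdef, LinearMap.lTensor_tmul]
      rw [Finset.sum_congr rfl fun i' _ => this i']
      simp [Pi.single_apply]
    have hkey : ∀ i, (∑ j, a i j • y j) = m i := by
      intro i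
      have hcomp : ∀ u : M ⊗[R] (Fin n → R),
          ψ i (LinearMap.lTensor M α u) = ∑ j, a i j • φ j u := by
        intro u
        induction u using TensorProduct.induction_on with
        | zero => simp
        | tmul x v =>
          simp only [hψdef, hφdef, LinearMap.lTensor_tmul, LinearMap.comp_apply,
            LinearEquiv.coe_coe, TensorProduct.rid_tmul, LinearMap.proj_apply]
          rw [hαdef]
          simp only [Matrix.mulVecLin_apply, Matrix.mulVec, dotProduct, Matrix.of_apply]
          rw [Finset.sum_smul]
          exact Finset.sum_congr rfl fun j _ => by rw [smul_smul]
        | add u v hu hv =>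
          rw [map_add, map_add, hu, hv, ← Finset.sum_add_distrib]
          exact Finset.sum_congr rfl fun j _ => by rw [map_add, smul_add]
      rw [← hψt i, ← hs, hcomp]
    -- the retraction of the quotient map
    set Y : (Fin n → R) →ₗ[R] M :=
      ∑ j, LinearMap.smulRight (LinearMap.proj j : (Fin n → R) →ₗ[R] R) (y j) with hYdef
    have hYapp : ∀ v : Fin n → R, Y v = ∑ j, v j • y j := by
      intro v
      rw [hYdef]
      simp [LinearMap.sum_apply]
    set w : (Fin n → R) →ₗ[R] N := q - f.comp Y with hwdef
    have hwker : LinearMap.ker p ≤ LinearMap.ker w := by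
      rw [← ha, Submodule.span_le]
      rintro _ ⟨i, rfl⟩
      simp only [SetLike.mem_coe, LinearMap.mem_ker, hwdef, LinearMap.sub_apply,
        LinearMap.comp_apply]
      rw [hYapp, ← hm i, sub_eq_zero]
      exact congrArg f (hkey i).symm
    -- build σ : C → N with σ ∘ p = w
    set e := LinearMap.quotKerEquivOfSurjective p hp with hedef
    set σ : (N ⧸ LinearMap.range f) →ₗ[R] N :=
      ((LinearMap.ker p).liftQ w hwker).comp (e.symm : _ →ₗ[R] _) with hσdef
    have hσp : ∀ v : Fin n → R, σ (p v) = w v := by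
      intro v
      have he : e (Submodule.Quotient.mk v) = p v := rfl
      have : e.symm (p v) = Submodule.Quotient.mk v := by
        rw [← he, LinearEquiv.symm_apply_apply]
      simp only [hσdef, LinearMap.comp_apply, LinearEquiv.coe_coe]
      rw [this]
      exact Submodule.liftQ_apply _ _ _
    have hπσ : ∀ c : N ⧸ LinearMap.range f, π (σ c) = c := by
      intro c
      obtain ⟨v, rfl⟩ := hp c
      rw [hσp v]
      have hπw : π (w v) = π (q v) := by
        simp only [hwdef, LinearMap.sub_apply, LinearMap.comp_apply, map_sub]
        have : π (f (Y v)) = 0 := by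
          rw [hπdef, Submodule.mkQ_apply, Submodule.Quotient.mk_eq_zero]
          exact ⟨Y v, rfl⟩
        rw [this, sub_zero]
      rw [hπw]
      exact LinearMap.congr_fun hq v
    -- now build the retraction g of f
    have hrange : ∀ x : N, x - σ (π x) ∈ LinearMap.range f := by
      intro x
      have : π (x - σ (π x)) = 0 := by
        rw [map_sub, hπσ, sub_self]
      rwa [hπdef, Submodule.mkQ_apply, Submodule.Quotient.mk_eq_zero] at this
    set eM := LinearEquiv.ofInjective f hinj with heMdef
    refine ⟨(eM.symm : _ →ₗ[R] _).comp
      (LinearMap.codRestrict (LinearMap.range f)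
        (LinearMap.id - σ.comp π) (fun x => by simpa using hrange x)), ?_⟩
    ext x
    simp only [LinearMap.comp_apply, LinearMap.id_apply, LinearEquiv.coe_coe]
    rw [LinearEquiv.symm_apply_eq]
    apply Subtype.ext
    have hπf : π (f x) = 0 := by
      rw [hπdef, Submodule.mkQ_apply, Submodule.Quotient.mk_eq_zero]
      exact ⟨x, rfl⟩
    simp only [heMdef, LinearEquiv.ofInjective_apply, LinearMap.codRestrict_apply,
      LinearMap.sub_apply, LinearMap.id_apply, LinearMap.comp_apply]
    rw [hπf, map_zero, sub_zero]
  · intro g hg K _ _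
    have hcomp : (LinearMap.rTensor K g).comp (LinearMap.rTensor K f) =
        LinearMap.id := by
      rw [← LinearMap.rTensor_comp, hg, LinearMap.rTensor_id]
    intro x y hxy
    have hx := LinearMap.congr_fun hcomp x
    have hy := LinearMap.congr_fun hcomp y
    simp only [LinearMap.comp_apply, LinearMap.id_apply] at hx hy
    rw [← hx, ← hy, hxy]
end

section
/- Let R be an F-finite reduced Noetherian ring of characteristic p > 0 and c ∈ R an element not in any minimal prime such that the localization R_c is strongly F-regular. Then R is strongly F-regular if and only if the R-module map R → R^{1/q}, 1 ↦ c^{1/q}, splits for some power q = p^e. -/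
universe u

/-- From a finite ring hom, extract a finite generating set with explicit coefficients. -/
lemma gen_of_finite {R S : Type*} [CommRing R] [CommRing S] (f : R →+* S) (hf : f.Finite) :
    ∃ s : Finset S, ∀ x : S, ∃ a : S → R, x = ∑ y ∈ s, f (a y) * y := by
  letI : Algebra R S := f.toAlgebra
  haveI : Module.Finite R S := hf
  obtain ⟨s, hs⟩ := Module.Finite.fg_top (R := R) (M := S)
  refine ⟨s, fun x => ?_⟩
  have hx : x ∈ Submodule.span R (↑s : Set S) := hs ▸ Submodule.mem_top
  obtain ⟨a, -, ha⟩ := Submodule.mem_span_finset.1 hx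
  refine ⟨a, ?_⟩
  rw [← ha]
  refine Finset.sum_congr rfl fun y _ => ?_
  rw [Algebra.smul_def]
  rfl

/-- From a splitting at `c`, construct splittings at all powers `c ^ n`. -/
lemma splitting_pow {R : Type*} [CommRing R] (p e : ℕ) (hp : 0 < p) (he : 0 < e)
    (ψ : R →+ R) (c : R)
    (hsemi : ∀ r x : R, ψ (r ^ p ^ e * x) = r * ψ x) (hc1 : ψ c = 1) (n : ℕ) :
    ∃ (E : ℕ) (φ : R →+ R), 0 < E ∧
      (∀ r x : R, φ (r ^ p ^ E * x) = r * φ x) ∧ φ (c ^ n) = 1 := by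
  -- iterate ψ to get splittings at high powers of c
  have key : ∀ k : ℕ, ∃ (φ : R →+ R) (N : ℕ), k + 1 ≤ N ∧
      (∀ r x : R, φ (r ^ p ^ ((k + 1) * e) * x) = r * φ x) ∧ φ (c ^ N) = 1 := by
    intro k
    induction k with
    | zero => exact ⟨ψ, 1, le_refl _, by simpa using hsemi, by simpa using hc1⟩
    | succ k ih =>
      obtain ⟨φ, N, hN, hφ, hφc⟩ := ih
      have hpp : 0 < p ^ ((k + 1) * e) := pow_pos hp _
      refine ⟨ψ.comp φ, N + p ^ ((k + 1) * e), by omega, fun r x => ?_, ?_⟩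
      · have h1 : r ^ p ^ ((k + 1 + 1) * e) * x = (r ^ p ^ e) ^ p ^ ((k + 1) * e) * x := by
          rw [← pow_mul, ← pow_add]
          ring_nf
        rw [AddMonoidHom.comp_apply, h1, hφ (r ^ p ^ e) x, hsemi r (φ x), AddMonoidHom.comp_apply]
      · have h2 : c ^ (N + p ^ ((k + 1) * e)) = c ^ p ^ ((k + 1) * e) * c ^ N := by
          rw [← pow_add]; ring_nf
        rw [AddMonoidHom.comp_apply, h2, hφ c (c ^ N), hφc, mul_one, hc1]
  obtain ⟨φ, N, hN, hφ, hφc⟩ := key n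
  refine ⟨(n + 1) * e, φ.comp (AddMonoidHom.mulLeft (c ^ (N - n))), by positivity,
    fun r x => ?_, ?_⟩
  · simp only [AddMonoidHom.comp_apply, AddMonoidHom.coe_mulLeft]
    rw [show c ^ (N - n) * (r ^ p ^ ((n + 1) * e) * x) =
      r ^ p ^ ((n + 1) * e) * (c ^ (N - n) * x) by ring, hφ]
  · simp only [AddMonoidHom.comp_apply, AddMonoidHom.coe_mulLeft]
    rw [← pow_add, show N - n + n = N by omega, hφc]

/-- `R` is *strongly F-regular* (in characteristic `p`): for every `c` not in any minimal
prime, the `R`-module map `R → R^{1/q}`, `1 ↦ c^{1/q}`, splits for some `q = pᵉ`.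
Identifying `R^{1/q}` with `R` via the `q`-th power map, a splitting is an additive map
`ψ : R → R` with `ψ(r^q · x) = r · ψ(x)` and `ψ(c) = 1`. -/
def StronglyFRegular (p : ℕ) (R : Type u) [CommRing R] : Prop :=
  ∀ c : R, (∀ P ∈ minimalPrimes R, c ∉ P) →
    ∃ (e : ℕ) (ψ : R →+ R), 0 < e ∧
      (∀ r x : R, ψ (r ^ p ^ e * x) = r * ψ x) ∧ ψ c = 1

/-- **Hochster–Huneke, Theorem 5.9.** Let `R` be an `F`-finite reduced
Noetherian ring of characteristic `p > 0` and `c` an element not in any minimal prime such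
that `R_c` is strongly `F`-regular.  Then `R` is strongly `F`-regular if and only if the map
`R → R^{1/q}`, `1 ↦ c^{1/q}`, splits for some `q = pᵉ`. -/
theorem stronglyFRegular_iff_splitting_at_c
    (p : ℕ) (hp : p.Prime) (R : Type u) [CommRing R] [IsNoetherianRing R] [ExpChar R p]
    (hred : IsReduced R) (hFfinite : (frobenius R p).Finite)
    (c : R) (hc : ∀ P ∈ minimalPrimes R, c ∉ P)
    (hloc : StronglyFRegular p (Localization.Away c)) :
    StronglyFRegular p R ↔
      ∃ (e : ℕ) (ψ : R →+ R), 0 < e ∧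
        (∀ r x : R, ψ (r ^ p ^ e * x) = r * ψ x) ∧ ψ c = 1 := by
  classical
  constructor
  · intro h; exact h c hc
  rintro ⟨e, ψ, he, hsemi, hψc⟩ c' hc'
  set S := Localization.Away c with hS
  set f := algebraMap R S with hf
  -- the localization map is injective since `c` avoids all minimal primes and `R` is reduced
  have hinj : Function.Injective f := by
    intro x y hxy
    by_contra hne
    have h0 : f (x - y) = 0 := by rw [map_sub, hxy, sub_self]
    rw [hf, IsLocalization.map_eq_zero_iff (Submonoid.powers c)] at h0
    obtain ⟨m, hm⟩ := h0
    obtain ⟨n, hn⟩ := m.2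
    have hxy0 : x - y ≠ 0 := sub_ne_zero.mpr hne
    have hnil : x - y ∉ nilradical R := by
      intro hmem
      exact hxy0 (hred.1 _ (mem_nilradical.1 hmem))
    rw [nilradical_eq_sInf, Ideal.mem_sInf] at hnil
    push_neg at hnil
    obtain ⟨P, hPp, hPx⟩ := hnil
    haveI : P.IsPrime := hPp
    obtain ⟨Q, hQmin, hQle⟩ := Ideal.exists_minimalPrimes_le (I := ⊥) (J := P) bot_le
    haveI hQp : Q.IsPrime := hQmin.1.1
    have hn' : c ^ n = (m : R) := hn
    have hzero : c ^ n * (x - y) ∈ Q := by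
      rw [hn', hm]; exact Q.zero_mem
    rcases hQp.mem_or_mem hzero with h | h
    · exact hc Q hQmin (hQp.mem_of_pow_mem n h)
    · exact hPx (hQle h)
  -- `c'` avoids all minimal primes of the localization
  have hc'S : ∀ P ∈ minimalPrimes S, f c' ∉ P := by
    intro P hP hmem
    haveI hPp : P.IsPrime := hP.1.1
    have hQp : (P.comap f).IsPrime := Ideal.IsPrime.comap f
    obtain ⟨Q₀, hQ₀min, hQ₀le⟩ := Ideal.exists_minimalPrimes_le (I := ⊥) (J := P.comap f) bot_le
    haveI hQ₀p : Q₀.IsPrime := hQ₀min.1.1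
    have hdisj : Disjoint ((Submonoid.powers c : Submonoid R) : Set R) (Q₀ : Set R) := by
      rw [Set.disjoint_left]
      rintro a ⟨n, rfl⟩ ha
      exact hc Q₀ hQ₀min (hQ₀p.mem_of_pow_mem n ha)
    have hprime := IsLocalization.isPrime_of_isPrime_disjoint (Submonoid.powers c) S Q₀ hQ₀p hdisj
    have hle : Q₀.map f ≤ P := by
      calc Q₀.map f ≤ (P.comap f).map f := Ideal.map_mono hQ₀le
        _ = P := IsLocalization.map_comap (Submonoid.powers c) S P
    have hPeq : P = Q₀.map f := le_antisymm (hP.2 ⟨hprime, bot_le⟩ hle) hle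
    have hQeq : P.comap f = Q₀ := by
      rw [hPeq]
      exact IsLocalization.comap_map_of_isPrime_disjoint (Submonoid.powers c) S hQ₀p hdisj
    have hc'Q : c' ∈ P.comap f := Ideal.mem_comap.mpr hmem
    rw [hQeq] at hc'Q
    exact hc' Q₀ hQ₀min hc'Q
  -- get a splitting at `c'` over the localization
  obtain ⟨e', ψ', he', hsemi', hψ'c'⟩ := hloc (f c') hc'S
  -- `R^{1/p^{e'}}` is a finite `R`-module
  have hitfin : ∀ n : ℕ, (iterateFrobenius R p n).Finite := by
    intro n
    induction n with
    | zero => rw [iterateFrobenius_zero]; exact RingHom.Finite.id R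
    | succ n ih =>
      have h1 : iterateFrobenius R p (n + 1) = (iterateFrobenius R p n).comp (frobenius R p) := by
        rw [← iterateFrobenius_one R p, ← iterateFrobenius_add]
      rw [h1]
      exact RingHom.Finite.comp ih hFfinite
  obtain ⟨s, hs⟩ := gen_of_finite (iterateFrobenius R p e') (hitfin e')
  -- the candidate map into the localization
  set η : R →+ S := ψ'.comp (f : R →+* S).toAddMonoidHom with hηdef
  have hηapp : ∀ x : R, η x = ψ' (f x) := fun _ => rfl
  have hη : ∀ r x : R, η (r ^ p ^ e' * x) = f r * η x := by
    intro r x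
    rw [hηapp, hηapp, map_mul, map_pow]
    exact hsemi' (f r) (f x)
  -- uniform denominator for the generators
  have hgen : ∀ t : Finset R, ∃ N : ℕ, ∀ y ∈ t, ∃ b : R, f (c ^ N) * η y = f b := by
    intro t
    induction t using Finset.induction_on with
    | empty => exact ⟨0, by simp⟩
    | @insert z t hz ih =>
      obtain ⟨N, hN⟩ := ih
      obtain ⟨⟨b₀, m⟩, hm⟩ := IsLocalization.surj (Submonoid.powers c) (η z)
      obtain ⟨n₀, hn₀⟩ := m.2
      have hn₀' : c ^ n₀ = (m : R) := hn₀
      have hz0 : f (c ^ n₀) * η z = f b₀ := by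
        rw [hn₀', mul_comm]
        exact hm
      refine ⟨N + n₀, fun y hy => ?_⟩
      rcases Finset.mem_insert.1 hy with rfl | hy'
      · refine ⟨c ^ N * b₀, ?_⟩
        rw [pow_add, map_mul, mul_assoc, hz0, ← map_mul]
      · obtain ⟨b, hb⟩ := hN y hy'
        refine ⟨c ^ n₀ * b, ?_⟩
        rw [pow_add, map_mul, mul_comm (f (c ^ N)) (f (c ^ n₀)), mul_assoc, hb, ← map_mul]
  obtain ⟨N, hN⟩ := hgen s
  -- uniform denominator for every element
  have hNall : ∀ x : R, ∃ b : R, f (c ^ N) * η x = f b := by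
    intro x
    obtain ⟨a, ha⟩ := hs x
    have hchoice : ∀ y : R, ∃ b : R, y ∈ s → f (c ^ N) * η y = f b := by
      intro y
      by_cases hy : y ∈ s
      · obtain ⟨b, hb⟩ := hN y hy; exact ⟨b, fun _ => hb⟩
      · exact ⟨0, fun h => absurd h hy⟩
    choose b hb using hchoice
    refine ⟨∑ y ∈ s, a y * b y, ?_⟩
    rw [ha, map_sum η, Finset.mul_sum, map_sum]
    refine Finset.sum_congr rfl fun y hy => ?_
    have h1 : η (iterateFrobenius R p e' (a y) * y) = f (a y) * η y := by
      rw [iterateFrobenius_def]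
      exact hη (a y) y
    rw [h1, map_mul, ← hb y hy]
    ring
  -- descend to an additive map `θ : R → R` with `θ (c') = c ^ N`
  choose θ₀ hθ₀ using hNall
  have hadd : ∀ x y : R, θ₀ (x + y) = θ₀ x + θ₀ y := by
    intro x y
    apply hinj
    rw [← hθ₀ (x + y), η.map_add, f.map_add, mul_add, hθ₀ x, hθ₀ y]
  set θ : R →+ R := AddMonoidHom.mk' θ₀ hadd with hθdef
  have hθapp : ∀ x, θ x = θ₀ x := fun _ => rfl
  have hθsemi : ∀ r x : R, θ (r ^ p ^ e' * x) = r * θ x := by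
    intro r x
    apply hinj
    rw [hθapp, hθapp, ← hθ₀ (r ^ p ^ e' * x), hη r x, f.map_mul, ← hθ₀ x]
    ring
  have hθc' : θ c' = c ^ N := by
    apply hinj
    rw [hθapp, ← hθ₀ c', hηapp, hψ'c', mul_one]
  -- compose with a splitting at `c ^ N`
  obtain ⟨E, φ, hE, hφsemi, hφc⟩ := splitting_pow p e hp.pos he ψ c hsemi hψc N
  refine ⟨e' + E, φ.comp θ, by omega, fun r x => ?_, ?_⟩
  · simp only [AddMonoidHom.comp_apply]
    have h1 : r ^ p ^ (e' + E) * x = (r ^ p ^ E) ^ p ^ e' * x := by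
      rw [← pow_mul, ← pow_add]
      ring_nf
    rw [h1, hθsemi, hφsemi]
  · simp only [AddMonoidHom.comp_apply]
    rw [hθc', hφc]
end
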